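/- Let ((Δ_i)_{0≤i≤n}, (ψ_i)_{0≤i≤n}) be a deformation of order n of a Coder pair (C, ψ_C), with obstruction Ob_C = Σ_{i+j=n+1, i,j>0} ((Δ_i ⊗ Id_C) ∘ Δ_j − (Id_C ⊗ Δ_i) ∘ Δ_j) and Ob_ψ = Σ_{i+j=n+1, i,j>0} (Δ_i ∘ ψ_j − (Id_C ⊗ ψ_i) ∘ Δ_j − (ψ_i ⊗ Id_C) ∘ Δ_j). Then the deformation is extensible to a deformation of order n+1 (i.e. there exist Δ_{n+1} ∈ Hom_k(C, C⊗C) and ψ_{n+1} ∈ Hom_k(C, C) so that the extended families satisfy the deformation equations for all 0 ≤ k ≤ n+1) if and only if (Ob_C, Ob_ψ) is a coboundary, i.e. there exist f ∈ Hom_k(C, C⊗C) and g ∈ Hom_k(C, C) with Ob_C = δ_c(f) and Ob_ψ = δ_c(g) + ω(f). -/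

import Mathlib

open TensorProduct LinearMap

variable {k C : Type} [Field k] [AddCommGroup C] [Module k C]

/-- `δ_c(g) = (Id_C ⊗ g) ∘ Δ − Δ ∘ g + (g ⊗ Id_C) ∘ Δ` for `g ∈ Hom(C, C)`
(coadjoint coefficients). -/
noncomputable def delta1 (Δ : C →ₗ[k] C ⊗[k] C) (g : C →ₗ[k] C) : C →ₗ[k] C ⊗[k] C :=
  LinearMap.lTensor C g ∘ₗ Δ - Δ ∘ₗ g + LinearMap.rTensor C g ∘ₗ Δ

/-- `δ_c(f) = (Id_C ⊗ f) ∘ Δ − (Δ ⊗ Id_C) ∘ f + (Id_C ⊗ Δ) ∘ f − (f ⊗ Id_C) ∘ Δ`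
for `f ∈ Hom(C, C ⊗ C)` (coadjoint coefficients). -/
noncomputable def delta2 (Δ : C →ₗ[k] C ⊗[k] C) (f : C →ₗ[k] C ⊗[k] C) :
    C →ₗ[k] C ⊗[k] (C ⊗[k] C) :=
  LinearMap.lTensor C f ∘ₗ Δ
    - (TensorProduct.assoc k C C C).toLinearMap ∘ₗ LinearMap.rTensor C Δ ∘ₗ f
    + LinearMap.lTensor C Δ ∘ₗ f
    - (TensorProduct.assoc k C C C).toLinearMap ∘ₗ LinearMap.rTensor C f ∘ₗ Δ

/-- `ω(g) = ψ_C ∘ g − g ∘ ψ_C` for `g ∈ Hom(C, C)`. -/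
noncomputable def omega1 (ψC : C →ₗ[k] C) (g : C →ₗ[k] C) : C →ₗ[k] C :=
  ψC ∘ₗ g - g ∘ₗ ψC

/-- `ω(f) = (ψ_C ⊗ Id_C) ∘ f + (Id_C ⊗ ψ_C) ∘ f − f ∘ ψ_C` for `f ∈ Hom(C, C ⊗ C)`. -/
noncomputable def omega2 (ψC : C →ₗ[k] C) (f : C →ₗ[k] C ⊗[k] C) : C →ₗ[k] C ⊗[k] C :=
  LinearMap.rTensor C ψC ∘ₗ f + LinearMap.lTensor C ψC ∘ₗ f - f ∘ₗ ψC

/-- A 1-parameter formal deformation `(Δ_t = Σ Δ_i t^i, ψ_t = Σ ψ_i t^i)` of a Coder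
pair `(C, ψ_C)`: `Δ_0 = Δ`, `ψ_0 = ψ_C`, and for every `k ≥ 0`,
`Σ_{i+j=k} ((Id_C ⊗ Δ_i) ∘ Δ_j − (Δ_i ⊗ Id_C) ∘ Δ_j) = 0` and
`Σ_{i+j=k} (Δ_i ∘ ψ_j − (ψ_i ⊗ Id_C) ∘ Δ_j − (Id_C ⊗ ψ_i) ∘ Δ_j) = 0`. -/
noncomputable def IsFormalDeformation (Δ : C →ₗ[k] C ⊗[k] C) (ψC : C →ₗ[k] C)
    (Δs : ℕ → (C →ₗ[k] C ⊗[k] C)) (ψs : ℕ → (C →ₗ[k] C)) : Prop :=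
  Δs 0 = Δ ∧ ψs 0 = ψC ∧
  (∀ n : ℕ, ∑ p ∈ Finset.HasAntidiagonal.antidiagonal n, LinearMap.lTensor C (Δs p.1) ∘ₗ Δs p.2
      = ∑ p ∈ Finset.HasAntidiagonal.antidiagonal n,
          (TensorProduct.assoc k C C C).toLinearMap ∘ₗ LinearMap.rTensor C (Δs p.1) ∘ₗ Δs p.2) ∧
  (∀ n : ℕ, ∑ p ∈ Finset.HasAntidiagonal.antidiagonal n, Δs p.1 ∘ₗ ψs p.2
      = ∑ p ∈ Finset.HasAntidiagonal.antidiagonal n,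
          (LinearMap.rTensor C (ψs p.1) ∘ₗ Δs p.2 + LinearMap.lTensor C (ψs p.1) ∘ₗ Δs p.2))

/-- The additive group of 4-cochains `Hom(C, C^{⊗4})`.  (Registered explicitly since
instance search struggles with the deeply nested tensor product.) -/
noncomputable instance instAddCommGroupHom4 :
    AddCommGroup (C →ₗ[k] C ⊗[k] (C ⊗[k] (C ⊗[k] C))) :=
  @LinearMap.addCommGroup k k C (C ⊗[k] (C ⊗[k] (C ⊗[k] C))) _ _ _
    (TensorProduct.addCommGroup) _ _ (RingHom.id k)

/-- `δ_c(F)` for a 3-cochain `F ∈ Hom(C, C ⊗ C ⊗ C)` (coadjoint coefficients):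
`δ_c(F) = (Id ⊗ F) ∘ Δ − (Δ ⊗ Id ⊗ Id) ∘ F + (Id ⊗ Δ ⊗ Id) ∘ F − (Id ⊗ Id ⊗ Δ) ∘ F
          + (F ⊗ Id) ∘ Δ`. -/
noncomputable def delta3 (Δ : C →ₗ[k] C ⊗[k] C) (F : C →ₗ[k] C ⊗[k] (C ⊗[k] C)) :
    C →ₗ[k] C ⊗[k] (C ⊗[k] (C ⊗[k] C)) :=
  LinearMap.lTensor C F ∘ₗ Δ
    - (TensorProduct.assoc k C C (C ⊗[k] C)).toLinearMap
        ∘ₗ LinearMap.rTensor (C ⊗[k] C) Δ ∘ₗ F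
    + LinearMap.lTensor C
        ((TensorProduct.assoc k C C C).toLinearMap ∘ₗ LinearMap.rTensor C Δ) ∘ₗ F
    - LinearMap.lTensor C (LinearMap.lTensor C Δ) ∘ₗ F
    + (LinearMap.lTensor C (TensorProduct.assoc k C C C).toLinearMap
        ∘ₗ (TensorProduct.assoc k C (C ⊗[k] C) C).toLinearMap)
        ∘ₗ LinearMap.rTensor C F ∘ₗ Δ

/-- `ω(F) = (ψ ⊗ Id ⊗ Id) ∘ F + (Id ⊗ ψ ⊗ Id) ∘ F + (Id ⊗ Id ⊗ ψ) ∘ F − F ∘ ψ` for a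
3-cochain `F ∈ Hom(C, C ⊗ C ⊗ C)`. -/
noncomputable def omega3 (ψC : C →ₗ[k] C) (F : C →ₗ[k] C ⊗[k] (C ⊗[k] C)) :
    C →ₗ[k] C ⊗[k] (C ⊗[k] C) :=
  LinearMap.rTensor (C ⊗[k] C) ψC ∘ₗ F
    + LinearMap.lTensor C (LinearMap.rTensor C ψC) ∘ₗ F
    + LinearMap.lTensor C (LinearMap.lTensor C ψC) ∘ₗ F
    - F ∘ₗ ψC

/-- A deformation of order `n` of a Coder pair `(C, ψ_C)`: `Δ_0 = Δ`, `ψ_0 = ψ_C`, and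
the deformation equations hold modulo `t^{n+1}`, i.e. for every `0 ≤ m ≤ n`. -/
noncomputable def IsDeformationOfOrder (n : ℕ) (Δ : C →ₗ[k] C ⊗[k] C) (ψC : C →ₗ[k] C)
    (Δs : ℕ → (C →ₗ[k] C ⊗[k] C)) (ψs : ℕ → (C →ₗ[k] C)) : Prop :=
  Δs 0 = Δ ∧ ψs 0 = ψC ∧
  (∀ m : ℕ, m ≤ n →
    ∑ p ∈ Finset.HasAntidiagonal.antidiagonal m, LinearMap.lTensor C (Δs p.1) ∘ₗ Δs p.2
      = ∑ p ∈ Finset.HasAntidiagonal.antidiagonal m,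
          (TensorProduct.assoc k C C C).toLinearMap ∘ₗ LinearMap.rTensor C (Δs p.1) ∘ₗ Δs p.2) ∧
  (∀ m : ℕ, m ≤ n →
    ∑ p ∈ Finset.HasAntidiagonal.antidiagonal m, Δs p.1 ∘ₗ ψs p.2
      = ∑ p ∈ Finset.HasAntidiagonal.antidiagonal m,
          (LinearMap.rTensor C (ψs p.1) ∘ₗ Δs p.2 + LinearMap.lTensor C (ψs p.1) ∘ₗ Δs p.2))

/-- The first obstruction component
`Ob_C = Σ_{i+j=n+1, i,j>0} ((Δ_i ⊗ Id_C) ∘ Δ_j − (Id_C ⊗ Δ_i) ∘ Δ_j)`. -/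
noncomputable def obC (n : ℕ) (Δs : ℕ → (C →ₗ[k] C ⊗[k] C)) :
    C →ₗ[k] C ⊗[k] (C ⊗[k] C) :=
  ∑ p ∈ (Finset.HasAntidiagonal.antidiagonal (n + 1)).filter (fun p => 0 < p.1 ∧ 0 < p.2),
    ((TensorProduct.assoc k C C C).toLinearMap ∘ₗ LinearMap.rTensor C (Δs p.1) ∘ₗ Δs p.2
      - LinearMap.lTensor C (Δs p.1) ∘ₗ Δs p.2)

/-- The second obstruction component
`Ob_ψ = Σ_{i+j=n+1, i,j>0} (Δ_i ∘ ψ_j − (Id_C ⊗ ψ_i) ∘ Δ_j − (ψ_i ⊗ Id_C) ∘ Δ_j)`. -/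
noncomputable def obPsi (n : ℕ) (Δs : ℕ → (C →ₗ[k] C ⊗[k] C)) (ψs : ℕ → (C →ₗ[k] C)) :
    C →ₗ[k] C ⊗[k] C :=
  ∑ p ∈ (Finset.HasAntidiagonal.antidiagonal (n + 1)).filter (fun p => 0 < p.1 ∧ 0 < p.2),
    (Δs p.1 ∘ₗ ψs p.2 - LinearMap.lTensor C (ψs p.1) ∘ₗ Δs p.2
      - LinearMap.rTensor C (ψs p.1) ∘ₗ Δs p.2)

lemma antidiagonal_succ_split {M : Type*} [AddCommMonoid M] (n : ℕ) (f : ℕ × ℕ → M) :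
    ∑ p ∈ Finset.HasAntidiagonal.antidiagonal (n + 1), f p
      = f (0, n + 1) + f (n + 1, 0)
        + ∑ p ∈ (Finset.HasAntidiagonal.antidiagonal (n + 1)).filter (fun p => 0 < p.1 ∧ 0 < p.2), f p := by
  have hset : Finset.HasAntidiagonal.antidiagonal (n + 1)
      = insert ((0 : ℕ), n + 1) (insert ((n + 1 : ℕ), (0 : ℕ))
          ((Finset.HasAntidiagonal.antidiagonal (n + 1)).filter (fun p => 0 < p.1 ∧ 0 < p.2))) := by
    ext ⟨a, b⟩
    simp only [Finset.mem_insert, Finset.mem_filter, Finset.HasAntidiagonal.mem_antidiagonal, Prod.mk.injEq]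
    omega
  have hne1 : ((0 : ℕ), n + 1) ∉ insert ((n + 1 : ℕ), (0 : ℕ))
      ((Finset.HasAntidiagonal.antidiagonal (n + 1)).filter (fun p => 0 < p.1 ∧ 0 < p.2)) := by
    simp only [Finset.mem_insert, Finset.mem_filter, Finset.HasAntidiagonal.mem_antidiagonal, Prod.mk.injEq,
      not_or, not_and]
    omega
  have hne2 : ((n + 1 : ℕ), (0 : ℕ)) ∉
      ((Finset.HasAntidiagonal.antidiagonal (n + 1)).filter (fun p => 0 < p.1 ∧ 0 < p.2)) := by
    simp only [Finset.mem_filter, Finset.HasAntidiagonal.mem_antidiagonal, not_and]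
    omega
  conv_lhs => rw [hset]
  rw [Finset.sum_insert hne1, Finset.sum_insert hne2, add_assoc]

lemma eqC_iff (Δ : C →ₗ[k] C ⊗[k] C) (n : ℕ)
    (Δs Δ' : ℕ → (C →ₗ[k] C ⊗[k] C))
    (h0 : Δs 0 = Δ) (hag : ∀ i, i ≤ n → Δ' i = Δs i)
    (F : C →ₗ[k] C ⊗[k] C) (htop : Δ' (n + 1) = F) :
    (∑ p ∈ Finset.HasAntidiagonal.antidiagonal (n + 1), LinearMap.lTensor C (Δ' p.1) ∘ₗ Δ' p.2
      = ∑ p ∈ Finset.HasAntidiagonal.antidiagonal (n + 1),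
          (TensorProduct.assoc k C C C).toLinearMap ∘ₗ LinearMap.rTensor C (Δ' p.1) ∘ₗ Δ' p.2)
      ↔ obC n Δs = delta2 Δ F := by
  have h0' : Δ' 0 = Δ := by rw [hag 0 (Nat.zero_le n), h0]
  have hmem : ∀ p ∈ (Finset.HasAntidiagonal.antidiagonal (n + 1)).filter (fun p => 0 < p.1 ∧ 0 < p.2),
      Δ' p.1 = Δs p.1 ∧ Δ' p.2 = Δs p.2 := by
    intro p hp
    simp only [Finset.mem_filter, Finset.HasAntidiagonal.mem_antidiagonal] at hp
    exact ⟨hag _ (by omega), hag _ (by omega)⟩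
  have hs1 : (∑ p ∈ (Finset.HasAntidiagonal.antidiagonal (n + 1)).filter (fun p => 0 < p.1 ∧ 0 < p.2),
        LinearMap.lTensor C (Δ' p.1) ∘ₗ Δ' p.2)
      = ∑ p ∈ (Finset.HasAntidiagonal.antidiagonal (n + 1)).filter (fun p => 0 < p.1 ∧ 0 < p.2),
        LinearMap.lTensor C (Δs p.1) ∘ₗ Δs p.2 :=
    Finset.sum_congr rfl fun p hp => by rw [(hmem p hp).1, (hmem p hp).2]
  have hs2 : (∑ p ∈ (Finset.HasAntidiagonal.antidiagonal (n + 1)).filter (fun p => 0 < p.1 ∧ 0 < p.2),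
        (TensorProduct.assoc k C C C).toLinearMap ∘ₗ LinearMap.rTensor C (Δ' p.1) ∘ₗ Δ' p.2)
      = ∑ p ∈ (Finset.HasAntidiagonal.antidiagonal (n + 1)).filter (fun p => 0 < p.1 ∧ 0 < p.2),
        (TensorProduct.assoc k C C C).toLinearMap ∘ₗ LinearMap.rTensor C (Δs p.1) ∘ₗ Δs p.2 :=
    Finset.sum_congr rfl fun p hp => by rw [(hmem p hp).1, (hmem p hp).2]
  have hob : obC n Δs
      = (∑ p ∈ (Finset.HasAntidiagonal.antidiagonal (n + 1)).filter (fun p => 0 < p.1 ∧ 0 < p.2),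
          (TensorProduct.assoc k C C C).toLinearMap ∘ₗ LinearMap.rTensor C (Δs p.1) ∘ₗ Δs p.2)
        - ∑ p ∈ (Finset.HasAntidiagonal.antidiagonal (n + 1)).filter (fun p => 0 < p.1 ∧ 0 < p.2),
          LinearMap.lTensor C (Δs p.1) ∘ₗ Δs p.2 := by
    unfold obC; exact Finset.sum_sub_distrib (G := C →ₗ[k] C ⊗[k] (C ⊗[k] C)) _ _
  simp only [antidiagonal_succ_split]
  rw [hs1, hs2, h0', htop, hob]
  unfold delta2
  constructor
  · intro h
    rw [← sub_eq_zero] at h ⊢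
    have h' : -((LinearMap.lTensor C Δ ∘ₗ F + LinearMap.lTensor C F ∘ₗ Δ
        + ∑ p ∈ (Finset.HasAntidiagonal.antidiagonal (n + 1)).filter (fun p => 0 < p.1 ∧ 0 < p.2),
          LinearMap.lTensor C (Δs p.1) ∘ₗ Δs p.2)
      - ((TensorProduct.assoc k C C C).toLinearMap ∘ₗ LinearMap.rTensor C Δ ∘ₗ F
        + (TensorProduct.assoc k C C C).toLinearMap ∘ₗ LinearMap.rTensor C F ∘ₗ Δ
        + ∑ p ∈ (Finset.HasAntidiagonal.antidiagonal (n + 1)).filter (fun p => 0 < p.1 ∧ 0 < p.2),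
          (TensorProduct.assoc k C C C).toLinearMap ∘ₗ LinearMap.rTensor C (Δs p.1) ∘ₗ Δs p.2))
        = 0 := by rw [h, neg_zero]
    rw [← h']
    abel
  · intro h
    rw [← sub_eq_zero] at h ⊢
    have h' : -(((∑ p ∈ (Finset.HasAntidiagonal.antidiagonal (n + 1)).filter (fun p => 0 < p.1 ∧ 0 < p.2),
          (TensorProduct.assoc k C C C).toLinearMap ∘ₗ LinearMap.rTensor C (Δs p.1) ∘ₗ Δs p.2)
        - ∑ p ∈ (Finset.HasAntidiagonal.antidiagonal (n + 1)).filter (fun p => 0 < p.1 ∧ 0 < p.2),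
          LinearMap.lTensor C (Δs p.1) ∘ₗ Δs p.2)
      - (LinearMap.lTensor C F ∘ₗ Δ
        - (TensorProduct.assoc k C C C).toLinearMap ∘ₗ LinearMap.rTensor C Δ ∘ₗ F
        + LinearMap.lTensor C Δ ∘ₗ F
        - (TensorProduct.assoc k C C C).toLinearMap ∘ₗ LinearMap.rTensor C F ∘ₗ Δ))
        = 0 := by rw [h, neg_zero]
    rw [← h']
    abel
lemma eqPsi_iff (Δ : C →ₗ[k] C ⊗[k] C) (ψC : C →ₗ[k] C) (n : ℕ)
    (Δs Δ' : ℕ → (C →ₗ[k] C ⊗[k] C)) (ψs ψ' : ℕ → (C →ₗ[k] C))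
    (h0 : Δs 0 = Δ) (h1 : ψs 0 = ψC)
    (hagΔ : ∀ i, i ≤ n → Δ' i = Δs i) (hagψ : ∀ i, i ≤ n → ψ' i = ψs i)
    (F : C →ₗ[k] C ⊗[k] C) (htopΔ : Δ' (n + 1) = F)
    (G : C →ₗ[k] C) (htopψ : ψ' (n + 1) = G) :
    (∑ p ∈ Finset.HasAntidiagonal.antidiagonal (n + 1), Δ' p.1 ∘ₗ ψ' p.2
      = ∑ p ∈ Finset.HasAntidiagonal.antidiagonal (n + 1),
          (LinearMap.rTensor C (ψ' p.1) ∘ₗ Δ' p.2 + LinearMap.lTensor C (ψ' p.1) ∘ₗ Δ' p.2))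
      ↔ obPsi n Δs ψs = delta1 Δ G + omega2 ψC F := by
  have h0' : Δ' 0 = Δ := by rw [hagΔ 0 (Nat.zero_le n), h0]
  have h1' : ψ' 0 = ψC := by rw [hagψ 0 (Nat.zero_le n), h1]
  have hmem : ∀ p ∈ (Finset.HasAntidiagonal.antidiagonal (n + 1)).filter (fun p => 0 < p.1 ∧ 0 < p.2),
      (Δ' p.1 = Δs p.1 ∧ Δ' p.2 = Δs p.2) ∧ (ψ' p.1 = ψs p.1 ∧ ψ' p.2 = ψs p.2) := by
    intro p hp
    simp only [Finset.mem_filter, Finset.HasAntidiagonal.mem_antidiagonal] at hp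
    exact ⟨⟨hagΔ _ (by omega), hagΔ _ (by omega)⟩, ⟨hagψ _ (by omega), hagψ _ (by omega)⟩⟩
  have hs1 : (∑ p ∈ (Finset.HasAntidiagonal.antidiagonal (n + 1)).filter (fun p => 0 < p.1 ∧ 0 < p.2),
        Δ' p.1 ∘ₗ ψ' p.2)
      = ∑ p ∈ (Finset.HasAntidiagonal.antidiagonal (n + 1)).filter (fun p => 0 < p.1 ∧ 0 < p.2),
        Δs p.1 ∘ₗ ψs p.2 :=
    Finset.sum_congr rfl fun p hp => by rw [(hmem p hp).1.1, (hmem p hp).2.2]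
  have hs2 : (∑ p ∈ (Finset.HasAntidiagonal.antidiagonal (n + 1)).filter (fun p => 0 < p.1 ∧ 0 < p.2),
        (LinearMap.rTensor C (ψ' p.1) ∘ₗ Δ' p.2 + LinearMap.lTensor C (ψ' p.1) ∘ₗ Δ' p.2))
      = ∑ p ∈ (Finset.HasAntidiagonal.antidiagonal (n + 1)).filter (fun p => 0 < p.1 ∧ 0 < p.2),
        (LinearMap.rTensor C (ψs p.1) ∘ₗ Δs p.2 + LinearMap.lTensor C (ψs p.1) ∘ₗ Δs p.2) :=
    Finset.sum_congr rfl fun p hp => by rw [(hmem p hp).1.2, (hmem p hp).2.1]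
  have hob : obPsi n Δs ψs
      = (∑ p ∈ (Finset.HasAntidiagonal.antidiagonal (n + 1)).filter (fun p => 0 < p.1 ∧ 0 < p.2),
          Δs p.1 ∘ₗ ψs p.2)
        - ∑ p ∈ (Finset.HasAntidiagonal.antidiagonal (n + 1)).filter (fun p => 0 < p.1 ∧ 0 < p.2),
          (LinearMap.rTensor C (ψs p.1) ∘ₗ Δs p.2 + LinearMap.lTensor C (ψs p.1) ∘ₗ Δs p.2) := by
    unfold obPsi
    rw [Finset.sum_sub_distrib (G := C →ₗ[k] C ⊗[k] C),
      Finset.sum_sub_distrib (G := C →ₗ[k] C ⊗[k] C),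
      Finset.sum_add_distrib (M := C →ₗ[k] C ⊗[k] C)]
    abel
  simp only [antidiagonal_succ_split]
  rw [hs1, hs2, h0', h1', htopΔ, htopψ, hob]
  unfold delta1 omega2
  constructor
  · intro h
    rw [← sub_eq_zero] at h ⊢
    rw [← h]
    abel
  · intro h
    rw [← sub_eq_zero] at h ⊢
    rw [← h]
    abel

/-- A deformation of order `n` of a Coder pair `(C, ψ_C)` extends to a deformation of
order `n + 1` (keeping terms of degree `≤ n`) if and only if its obstruction
`(Ob_C, Ob_ψ)` is a coboundary: `Ob_C = δ_c(f)` and `Ob_ψ = δ_c(g) + ω(f)` for some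
2-cochain `(f, g)`. -/
theorem extensible_iff_obstruction_coboundary [CharZero k]
    (Δ : C →ₗ[k] C ⊗[k] C)
    (hΔ : (TensorProduct.assoc k C C C).toLinearMap ∘ₗ LinearMap.rTensor C Δ ∘ₗ Δ
        = LinearMap.lTensor C Δ ∘ₗ Δ)
    (ψC : C →ₗ[k] C)
    (hψC : Δ ∘ₗ ψC = LinearMap.rTensor C ψC ∘ₗ Δ + LinearMap.lTensor C ψC ∘ₗ Δ)
    (n : ℕ) (Δs : ℕ → (C →ₗ[k] C ⊗[k] C)) (ψs : ℕ → (C →ₗ[k] C))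
    (hdef : IsDeformationOfOrder n Δ ψC Δs ψs) :
    (∃ (Δs' : ℕ → (C →ₗ[k] C ⊗[k] C)) (ψs' : ℕ → (C →ₗ[k] C)),
        (∀ i : ℕ, i ≤ n → Δs' i = Δs i) ∧ (∀ i : ℕ, i ≤ n → ψs' i = ψs i) ∧
        IsDeformationOfOrder (n + 1) Δ ψC Δs' ψs')
      ↔ (∃ (f : C →ₗ[k] C ⊗[k] C) (g : C →ₗ[k] C),
          obC n Δs = delta2 Δ f ∧ obPsi n Δs ψs = delta1 Δ g + omega2 ψC f) := by

  obtain ⟨hd0, hd1, hdC, hdP⟩ := hdef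
  constructor
  · rintro ⟨Δ', ψ', hagΔ, hagψ, h0', h1', hC', hP'⟩
    exact ⟨Δ' (n + 1), ψ' (n + 1),
      (eqC_iff Δ n Δs Δ' hd0 hagΔ _ rfl).mp (hC' (n + 1) le_rfl),
      (eqPsi_iff Δ ψC n Δs Δ' ψs ψ' hd0 hd1 hagΔ hagψ _ rfl _ rfl).mp (hP' (n + 1) le_rfl)⟩
  · rintro ⟨f, g, hf, hg⟩
    have hagΔ : ∀ i, i ≤ n → (fun i => if i = n + 1 then f else Δs i) i = Δs i :=
      fun i hi => if_neg (by omega)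
    have hagψ : ∀ i, i ≤ n → (fun i => if i = n + 1 then g else ψs i) i = ψs i :=
      fun i hi => if_neg (by omega)
    refine ⟨fun i => if i = n + 1 then f else Δs i, fun i => if i = n + 1 then g else ψs i,
      hagΔ, hagψ, by rw [hagΔ 0 (Nat.zero_le n), hd0], by rw [hagψ 0 (Nat.zero_le n), hd1],
      ?_, ?_⟩
    · intro m hm
      rcases Nat.eq_or_lt_of_le hm with heq | hlt
      · subst heq
        exact (eqC_iff Δ n Δs _ hd0 hagΔ f (if_pos rfl)).mpr hf
      · have hm' : m ≤ n := by omega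
        have e1 : (∑ p ∈ Finset.HasAntidiagonal.antidiagonal m,
              LinearMap.lTensor C ((fun i => if i = n + 1 then f else Δs i) p.1)
                ∘ₗ (fun i => if i = n + 1 then f else Δs i) p.2)
            = ∑ p ∈ Finset.HasAntidiagonal.antidiagonal m, LinearMap.lTensor C (Δs p.1) ∘ₗ Δs p.2 :=
          Finset.sum_congr rfl fun p hp => by
            have := Finset.HasAntidiagonal.mem_antidiagonal.mp hp
            rw [hagΔ p.1 (by omega), hagΔ p.2 (by omega)]
        have e2 : (∑ p ∈ Finset.HasAntidiagonal.antidiagonal m,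
              (TensorProduct.assoc k C C C).toLinearMap
                ∘ₗ LinearMap.rTensor C ((fun i => if i = n + 1 then f else Δs i) p.1)
                ∘ₗ (fun i => if i = n + 1 then f else Δs i) p.2)
            = ∑ p ∈ Finset.HasAntidiagonal.antidiagonal m,
              (TensorProduct.assoc k C C C).toLinearMap
                ∘ₗ LinearMap.rTensor C (Δs p.1) ∘ₗ Δs p.2 :=
          Finset.sum_congr rfl fun p hp => by
            have := Finset.HasAntidiagonal.mem_antidiagonal.mp hp
            rw [hagΔ p.1 (by omega), hagΔ p.2 (by omega)]
        rw [e1, e2]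
        exact hdC m hm'
    · intro m hm
      rcases Nat.eq_or_lt_of_le hm with heq | hlt
      · subst heq
        exact (eqPsi_iff Δ ψC n Δs _ ψs _ hd0 hd1 hagΔ hagψ f (if_pos rfl)
          g (if_pos rfl)).mpr hg
      · have hm' : m ≤ n := by omega
        have e1 : (∑ p ∈ Finset.HasAntidiagonal.antidiagonal m,
              (fun i => if i = n + 1 then f else Δs i) p.1
                ∘ₗ (fun i => if i = n + 1 then g else ψs i) p.2)
            = ∑ p ∈ Finset.HasAntidiagonal.antidiagonal m, Δs p.1 ∘ₗ ψs p.2 :=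
          Finset.sum_congr rfl fun p hp => by
            have := Finset.HasAntidiagonal.mem_antidiagonal.mp hp
            rw [hagΔ p.1 (by omega), hagψ p.2 (by omega)]
        have e2 : (∑ p ∈ Finset.HasAntidiagonal.antidiagonal m,
              (LinearMap.rTensor C ((fun i => if i = n + 1 then g else ψs i) p.1)
                  ∘ₗ (fun i => if i = n + 1 then f else Δs i) p.2
                + LinearMap.lTensor C ((fun i => if i = n + 1 then g else ψs i) p.1)
                  ∘ₗ (fun i => if i = n + 1 then f else Δs i) p.2))
            = ∑ p ∈ Finset.HasAntidiagonal.antidiagonal m,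
              (LinearMap.rTensor C (ψs p.1) ∘ₗ Δs p.2
                + LinearMap.lTensor C (ψs p.1) ∘ₗ Δs p.2) :=
          Finset.sum_congr rfl fun p hp => by
            have := Finset.HasAntidiagonal.mem_antidiagonal.mp hp
            rw [hagΔ p.2 (by omega), hagψ p.1 (by omega)]
        rw [e1, e2]
        exact hdP m hm'
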